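/- Let a > 0 and let b, d, α, λ be real numbers with λa − α²a² ≥ 0, and set X = √(λa − α²a²). Then ∫_0^X [ −(1/2)( (2ξ⁴/(3a²))(d/a² − 2b²/a³) − 2α²dξ²/a² ) − (2ξ²/(3a))( ξ²(3b²/a⁴ − d/a³) + α²(d/a − b²/a²) ) − (b²/(3a))(α² − ξ²/a²)² + (b²/(2a))( 5ξ⁴/(2a⁴) − 3ξ²α²/a² + α⁴/2 ) ] dξ = X · ( −α⁴b²/(9a) − λα²d/(45a) + λα²b²/(9a²) + λ²d/(15a²) − 2α⁴d/45 − λ²b²/(12a³) ). -/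

import Mathlib

open Set MeasureTheory intervalIntegral

/-- Explicit `ξ`-integration, over the fiber `0 < ξ < X = √(λa - α²a²)`, of the integrand of
the second-order spectral invariant, with `a = v(x)`, `b = v'(x)`, `d = v''(x)`. -/
theorem fiberwise_xi_integration
    (a b d α lam : ℝ) (ha : 0 < a) (hnonneg : 0 ≤ lam * a - α ^ 2 * a ^ 2) :
    (∫ ξ in (0 : ℝ)..Real.sqrt (lam * a - α ^ 2 * a ^ 2),
        (-(1 / 2) * ((2 * ξ ^ 4 / (3 * a ^ 2)) * (d / a ^ 2 - 2 * b ^ 2 / a ^ 3) -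
            2 * α ^ 2 * d * ξ ^ 2 / a ^ 2)
          - (2 * ξ ^ 2 / (3 * a)) *
              (ξ ^ 2 * (3 * b ^ 2 / a ^ 4 - d / a ^ 3) + α ^ 2 * (d / a - b ^ 2 / a ^ 2))
          - (b ^ 2 / (3 * a)) * (α ^ 2 - ξ ^ 2 / a ^ 2) ^ 2
          + (b ^ 2 / (2 * a)) *
              (5 * ξ ^ 4 / (2 * a ^ 4) - 3 * ξ ^ 2 * α ^ 2 / a ^ 2 + α ^ 4 / 2)))
      = Real.sqrt (lam * a - α ^ 2 * a ^ 2) *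
          (-α ^ 4 * b ^ 2 / (9 * a) - lam * α ^ 2 * d / (45 * a) +
            lam * α ^ 2 * b ^ 2 / (9 * a ^ 2) + lam ^ 2 * d / (15 * a ^ 2) -
            2 * α ^ 4 * d / 45 - lam ^ 2 * b ^ 2 / (12 * a ^ 3)) := by
  have ha' : a ≠ 0 := ha.ne'
  set X := Real.sqrt (lam * a - α ^ 2 * a ^ 2) with hX
  have hX2 : X ^ 2 = lam * a - α ^ 2 * a ^ 2 := Real.sq_sqrt hnonneg
  set c4 : ℝ := d / (3 * a ^ 4) - 5 * b ^ 2 / (12 * a ^ 5) with hc4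
  set c2 : ℝ := α ^ 2 * d / (3 * a ^ 2) - α ^ 2 * b ^ 2 / (6 * a ^ 3) with hc2
  set c0 : ℝ := -(b ^ 2 * α ^ 4) / (12 * a) with hc0
  have hfun : ∀ ξ : ℝ,
      (-(1 / 2) * ((2 * ξ ^ 4 / (3 * a ^ 2)) * (d / a ^ 2 - 2 * b ^ 2 / a ^ 3) -
            2 * α ^ 2 * d * ξ ^ 2 / a ^ 2)
          - (2 * ξ ^ 2 / (3 * a)) *
              (ξ ^ 2 * (3 * b ^ 2 / a ^ 4 - d / a ^ 3) + α ^ 2 * (d / a - b ^ 2 / a ^ 2))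
          - (b ^ 2 / (3 * a)) * (α ^ 2 - ξ ^ 2 / a ^ 2) ^ 2
          + (b ^ 2 / (2 * a)) *
              (5 * ξ ^ 4 / (2 * a ^ 4) - 3 * ξ ^ 2 * α ^ 2 / a ^ 2 + α ^ 4 / 2))
        = c4 * ξ ^ 4 + c2 * ξ ^ 2 + c0 := by
    intro ξ
    rw [hc4, hc2, hc0]
    field_simp
    ring
  have hint : (∫ ξ in (0 : ℝ)..X,
      (-(1 / 2) * ((2 * ξ ^ 4 / (3 * a ^ 2)) * (d / a ^ 2 - 2 * b ^ 2 / a ^ 3) -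
            2 * α ^ 2 * d * ξ ^ 2 / a ^ 2)
          - (2 * ξ ^ 2 / (3 * a)) *
              (ξ ^ 2 * (3 * b ^ 2 / a ^ 4 - d / a ^ 3) + α ^ 2 * (d / a - b ^ 2 / a ^ 2))
          - (b ^ 2 / (3 * a)) * (α ^ 2 - ξ ^ 2 / a ^ 2) ^ 2
          + (b ^ 2 / (2 * a)) *
              (5 * ξ ^ 4 / (2 * a ^ 4) - 3 * ξ ^ 2 * α ^ 2 / a ^ 2 + α ^ 4 / 2)))
      = ∫ ξ in (0 : ℝ)..X, (c4 * ξ ^ 4 + c2 * ξ ^ 2 + c0) := by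
    refine intervalIntegral.integral_congr fun ξ _ => hfun ξ
  rw [hint]
  have h1 : IntervalIntegrable (fun ξ : ℝ => c4 * ξ ^ 4) volume 0 X :=
    (continuous_const.mul (continuous_pow 4)).intervalIntegrable _ _
  have h2 : IntervalIntegrable (fun ξ : ℝ => c2 * ξ ^ 2) volume 0 X :=
    (continuous_const.mul (continuous_pow 2)).intervalIntegrable _ _
  have h3 : IntervalIntegrable (fun ξ : ℝ => c0) volume 0 X :=
    intervalIntegrable_const
  rw [intervalIntegral.integral_add (h1.add h2) h3,
    intervalIntegral.integral_add h1 h2,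
    intervalIntegral.integral_const,
    intervalIntegral.integral_const_mul, intervalIntegral.integral_const_mul,
    integral_pow, integral_pow]
  have hX5 : X ^ (4 + 1) = X * (X ^ 2) ^ 2 := by ring
  have hX3 : X ^ (2 + 1) = X * X ^ 2 := by ring
  rw [hX5, hX3, hX2, hc4, hc2, hc0]
  field_simp
  ring
  field_simp
  ring
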